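/- Let φ, ψ : ℝ² → ℝ be Schwartz functions and let C_𝔣 > 0 satisfy 1/C_𝔣 = ∫_ℝ (1 − cos(2πz))/|z|^{3/2} dz. For a function χ : ℝ² → ℝ define (√𝔇_{x₁}χ)(x₁,x₂) = C_𝔣·∫_ℝ (χ(x₁,x₂) − χ(x₁−z,x₂))/|z|^{3/2} dz, define √𝔇_{x₂} analogously in the second variable, and √𝔇^{⊗2} = √𝔇_{x₁}√𝔇_{x₂}. Then for all (x₁,x₂) ∈ ℝ², (√𝔇^{⊗2}(φψ))(x₁,x₂) = (√𝔇^{⊗2}φ)(x₁,x₂)·ψ(x₁,x₂) + C_𝔣·∫_ℝ (√𝔇_{x₁}φ)(x₁, x₂−z)·(ψ(x₁,x₂) − ψ(x₁,x₂−z))/|z|^{3/2} dz + C_𝔣·∫_ℝ (√𝔇_{x₂}φ)(x₁−z, x₂)·(ψ(x₁,x₂) − ψ(x₁−z,x₂))/|z|^{3/2} dz + C_𝔣²·∬_{ℝ²} φ(x₁−z₁, x₂−z₂)·A(z₁,z₂) / (|z₁|^{3/2}|z₂|^{3/2}) dz₁ dz₂, where A(z₁,z₂) = ψ(x₁,x₂)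 − ψ(x₁−z₁,x₂) − ψ(x₁,x₂−z₂) + ψ(x₁−z₁,x₂−z₂). -/

import Mathlib

open MeasureTheory Set


/-- The `1/2`-fractional derivative in the first variable, in singular-integral form. -/
noncomputable def sqrtD1 (Cf : ℝ) (χ : ℝ → ℝ → ℝ) (x₁ x₂ : ℝ) : ℝ :=
  Cf * ∫ z : ℝ, (χ x₁ x₂ - χ (x₁ - z) x₂) / |z| ^ ((3:ℝ)/2)

/-- The `1/2`-fractional derivative in the second variable, in singular-integral form. -/
noncomputable def sqrtD2 (Cf : ℝ) (χ : ℝ → ℝ → ℝ) (x₁ x₂ : ℝ) : ℝ :=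
  Cf * ∫ z : ℝ, (χ x₁ x₂ - χ x₁ (x₂ - z)) / |z| ^ ((3:ℝ)/2)

/-- The cross fractional derivative `√𝔇^{⊗2} = √𝔇_{x₁}√𝔇_{x₂}`. -/
noncomputable def sqrtDD (Cf : ℝ) (χ : ℝ → ℝ → ℝ) : ℝ → ℝ → ℝ :=
  sqrtD1 Cf (sqrtD2 Cf χ)

namespace FracLeib

noncomputable def mbd (z : ℝ) : ℝ := min 1 |z|
noncomputable def ker (z : ℝ) : ℝ := |z| ^ ((3:ℝ)/2)

lemma mbd_nonneg (z : ℝ) : 0 ≤ mbd z := le_min zero_le_one (abs_nonneg z)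
lemma mbd_le_one (z : ℝ) : mbd z ≤ 1 := min_le_left _ _
lemma mbd_le_abs (z : ℝ) : mbd z ≤ |z| := min_le_right _ _
lemma ker_nonneg (z : ℝ) : 0 ≤ ker z := Real.rpow_nonneg (abs_nonneg z) _
lemma ker_cont : Continuous ker :=
  continuous_abs.rpow_const (fun x => Or.inr (by norm_num))
lemma ker_meas : Measurable ker := ker_cont.measurable

lemma J_meas : Measurable fun z : ℝ => mbd z / ker z :=
  ((continuous_const.min continuous_abs).measurable).div ker_meas

lemma J_even (z : ℝ) : mbd (-z) / ker (-z) = mbd z / ker z := by simp [mbd, ker]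

lemma integrable_J : Integrable (fun z : ℝ => mbd z / ker z) := by
  have h01 : IntegrableOn (fun z : ℝ => mbd z / ker z) (Ioc 0 1) := by
    have hdom : IntegrableOn (fun z : ℝ => z ^ (-(1:ℝ)/2)) (Ioc 0 1) :=
      (intervalIntegrable_iff_integrableOn_Ioc_of_le zero_le_one).1
        (intervalIntegral.intervalIntegrable_rpow' (by norm_num))
    refine hdom.mono' J_meas.aestronglyMeasurable ?_
    filter_upwards [ae_restrict_mem measurableSet_Ioc] with z hz
    obtain ⟨hz0, _⟩ := hz
    have hza : |z| = z := abs_of_pos hz0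
    rw [Real.norm_eq_abs, abs_div, abs_of_nonneg (mbd_nonneg z), abs_of_nonneg (ker_nonneg z)]
    have h2 : |z| / ker z = z ^ (-(1:ℝ)/2) := by
      rw [ker, hza]
      nth_rewrite 1 [show (z:ℝ) = z ^ (1:ℝ) from (Real.rpow_one z).symm]
      rw [← Real.rpow_sub hz0]
      norm_num
    calc mbd z / ker z ≤ |z| / ker z :=
          div_le_div_of_nonneg_right (mbd_le_abs z) (ker_nonneg z)
      _ = z ^ (-(1:ℝ)/2) := h2
  have h1i : IntegrableOn (fun z : ℝ => mbd z / ker z) (Ioi 1) := by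
    have hdom : IntegrableOn (fun z : ℝ => z ^ (-(3:ℝ)/2)) (Ioi 1) :=
      integrableOn_Ioi_rpow_of_lt (by norm_num) one_pos
    refine hdom.mono' J_meas.aestronglyMeasurable ?_
    filter_upwards [ae_restrict_mem measurableSet_Ioi] with z hz
    have hz0 : (0:ℝ) < z := lt_trans one_pos hz
    have hza : |z| = z := abs_of_pos hz0
    rw [Real.norm_eq_abs, abs_div, abs_of_nonneg (mbd_nonneg z), abs_of_nonneg (ker_nonneg z)]
    have h2 : (1:ℝ) / ker z = z ^ (-(3:ℝ)/2) := by
      rw [ker, hza, one_div, ← Real.rpow_neg hz0.le]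
      norm_num
    calc mbd z / ker z ≤ 1 / ker z :=
          div_le_div_of_nonneg_right (mbd_le_one z) (ker_nonneg z)
      _ = z ^ (-(3:ℝ)/2) := h2
  have hpos : IntegrableOn (fun z : ℝ => mbd z / ker z) (Ioi 0) := by
    rw [← Ioc_union_Ioi_eq_Ioi (zero_le_one)]
    exact h01.union h1i
  have hind : Integrable ((Ioi (0:ℝ)).indicator fun z : ℝ => mbd z / ker z) :=
    (integrable_indicator_iff measurableSet_Ioi).2 hpos
  have hneg : Integrable (fun z : ℝ => ((Ioi (0:ℝ)).indicator fun z : ℝ => mbd z / ker z) (-z)) :=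
    hind.comp_neg
  have : (fun z : ℝ => mbd z / ker z)
      = fun z => ((Ioi (0:ℝ)).indicator fun z : ℝ => mbd z / ker z) z
        + ((Ioi (0:ℝ)).indicator fun z : ℝ => mbd z / ker z) (-z) := by
    funext z
    rcases lt_trichotomy z 0 with h | h | h
    · rw [indicator_of_notMem (by simpa using h.le), indicator_of_mem (by simpa using h), J_even,
        zero_add]
    · subst h; simp [mbd, ker]
    · rw [indicator_of_mem (by simpa using h), indicator_of_notMem (by simpa using h.le), add_zero]
  rw [this]
  exact hind.add hneg


lemma integrable_div_ker {f : ℝ → ℝ} (hf : Continuous f) {C : ℝ}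
    (hC : ∀ z, |f z| ≤ C * mbd z) :
    Integrable (fun z => f z / ker z) := by
  refine (integrable_J.const_mul C).mono'
    ((hf.measurable.div ker_meas).aestronglyMeasurable) (ae_of_all _ fun z => ?_)
  rw [Real.norm_eq_abs, abs_div, abs_of_nonneg (ker_nonneg z)]
  calc |f z| / ker z ≤ (C * mbd z) / ker z :=
        div_le_div_of_nonneg_right (hC z) (ker_nonneg z)
    _ = C * (mbd z / ker z) := by ring

lemma slice_int {h : ℝ → ℝ} (hc : Continuous h) {C z₁ : ℝ}
    (hb : ∀ z₂, |h z₂| ≤ C * mbd z₁ * mbd z₂) :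
    Integrable fun z₂ => h z₂ / (ker z₁ * ker z₂) := by
  have key : Integrable fun z₂ => (h z₂ / ker z₁) / ker z₂ := by
    refine integrable_div_ker (hc.div_const _) (C := C * mbd z₁ / ker z₁) fun z₂ => ?_
    rw [abs_div, abs_of_nonneg (ker_nonneg z₁)]
    calc |h z₂| / ker z₁ ≤ (C * mbd z₁ * mbd z₂) / ker z₁ :=
          div_le_div_of_nonneg_right (hb z₂) (ker_nonneg z₁)
      _ = C * mbd z₁ / ker z₁ * mbd z₂ := by ring
  simpa [div_div] using key

lemma joint_int {h : ℝ × ℝ → ℝ} (hc : Continuous h) {C : ℝ}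
    (hb : ∀ z : ℝ × ℝ, |h z| ≤ C * mbd z.1 * mbd z.2) :
    Integrable (fun z : ℝ × ℝ => h z / (ker z.1 * ker z.2)) (volume.prod volume) := by
  refine ((integrable_J.const_mul C).mul_prod integrable_J).mono'
    ((hc.measurable.div
      ((ker_meas.comp measurable_fst).mul (ker_meas.comp measurable_snd))).aestronglyMeasurable)
    (ae_of_all _ fun z => ?_)
  rw [Real.norm_eq_abs, abs_div, abs_of_nonneg (mul_nonneg (ker_nonneg _) (ker_nonneg _))]
  calc |h z| / (ker z.1 * ker z.2) ≤ (C * mbd z.1 * mbd z.2) / (ker z.1 * ker z.2) :=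
        div_le_div_of_nonneg_right (hb z) (mul_nonneg (ker_nonneg _) (ker_nonneg _))
    _ = C * (mbd z.1 / ker z.1) * (mbd z.2 / ker z.2) := by ring

/-- Bounded Lipschitz functions with a bound on double differences. -/
structure NiceFun (f : ℝ × ℝ → ℝ) (M : ℝ) : Prop where
  nonneg : 0 ≤ M
  cont : Continuous f
  bdd : ∀ p, |f p| ≤ M
  lip : ∀ p q, |f p - f q| ≤ M * ‖p - q‖
  mixed : ∀ x₁ x₂ z₁ z₂ : ℝ,
    |f (x₁, x₂) - f (x₁ - z₁, x₂) - f (x₁, x₂ - z₂) + f (x₁ - z₁, x₂ - z₂)|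
      ≤ M * (|z₁| * |z₂|)

lemma norm_pair_sub₁ (y₁ y₂ z : ℝ) : ‖((y₁, y₂) : ℝ × ℝ) - (y₁ - z, y₂)‖ = |z| := by
  have h : ((y₁, y₂) : ℝ × ℝ) - (y₁ - z, y₂) = (z, 0) := by
    ext <;> simp
  rw [h, Prod.norm_def]
  simp [Real.norm_eq_abs, max_eq_left (abs_nonneg z)]

lemma norm_pair_sub₂ (y₁ y₂ z : ℝ) : ‖((y₁, y₂) : ℝ × ℝ) - (y₁, y₂ - z)‖ = |z| := by
  have h : ((y₁, y₂) : ℝ × ℝ) - (y₁, y₂ - z) = (0, z) := by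
    ext <;> simp
  rw [h, Prod.norm_def]
  simp [Real.norm_eq_abs, max_eq_right (abs_nonneg z)]

namespace NiceFun

variable {f : ℝ × ℝ → ℝ} {M : ℝ}

lemma lip1 (h : NiceFun f M) (y₁ y₂ z : ℝ) : |f (y₁, y₂) - f (y₁ - z, y₂)| ≤ M * |z| := by
  have := h.lip (y₁, y₂) (y₁ - z, y₂)
  rwa [norm_pair_sub₁] at this

lemma lip2 (h : NiceFun f M) (y₁ y₂ z : ℝ) : |f (y₁, y₂) - f (y₁, y₂ - z)| ≤ M * |z| := by
  have := h.lip (y₁, y₂) (y₁, y₂ - z)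
  rwa [norm_pair_sub₂] at this

lemma diff1 (h : NiceFun f M) (y₁ y₂ z : ℝ) :
    |f (y₁, y₂) - f (y₁ - z, y₂)| ≤ 2 * M * mbd z := by
  rcases le_total |z| 1 with hz | hz
  · have := h.lip1 y₁ y₂ z
    have hm : mbd z = |z| := min_eq_right hz
    rw [hm]; nlinarith [abs_nonneg z, h.nonneg]
  · have := abs_sub (f (y₁, y₂)) (f (y₁ - z, y₂))
    have h1 := h.bdd (y₁, y₂); have h2 := h.bdd (y₁ - z, y₂)
    have hm : mbd z = 1 := min_eq_left hz
    rw [hm]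
    calc |f (y₁, y₂) - f (y₁ - z, y₂)| ≤ |f (y₁, y₂)| + |f (y₁ - z, y₂)| := abs_sub _ _
      _ ≤ 2 * M * 1 := by linarith

lemma diff2 (h : NiceFun f M) (y₁ y₂ z : ℝ) :
    |f (y₁, y₂) - f (y₁, y₂ - z)| ≤ 2 * M * mbd z := by
  rcases le_total |z| 1 with hz | hz
  · have := h.lip2 y₁ y₂ z
    have hm : mbd z = |z| := min_eq_right hz
    rw [hm]; nlinarith [abs_nonneg z, h.nonneg]
  · have h1 := h.bdd (y₁, y₂); have h2 := h.bdd (y₁, y₂ - z)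
    have hm : mbd z = 1 := min_eq_left hz
    rw [hm]
    calc |f (y₁, y₂) - f (y₁, y₂ - z)| ≤ |f (y₁, y₂)| + |f (y₁, y₂ - z)| := abs_sub _ _
      _ ≤ 2 * M * 1 := by linarith

lemma mixed' (h : NiceFun f M) (x₁ x₂ z₁ z₂ : ℝ) :
    |f (x₁, x₂) - f (x₁ - z₁, x₂) - f (x₁, x₂ - z₂) + f (x₁ - z₁, x₂ - z₂)|
      ≤ 4 * M * (mbd z₁ * mbd z₂) := by
  have hM := h.nonneg
  have hb : |f (x₁, x₂) - f (x₁ - z₁, x₂) - f (x₁, x₂ - z₂) + f (x₁ - z₁, x₂ - z₂)|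
      ≤ |f (x₁, x₂) - f (x₁ - z₁, x₂)| + |f (x₁, x₂ - z₂) - f (x₁ - z₁, x₂ - z₂)| := by
    have : f (x₁, x₂) - f (x₁ - z₁, x₂) - f (x₁, x₂ - z₂) + f (x₁ - z₁, x₂ - z₂)
        = (f (x₁, x₂) - f (x₁ - z₁, x₂)) - (f (x₁, x₂ - z₂) - f (x₁ - z₁, x₂ - z₂)) := by ring
    rw [this]; exact abs_sub _ _
  have hb' : |f (x₁, x₂) - f (x₁ - z₁, x₂) - f (x₁, x₂ - z₂) + f (x₁ - z₁, x₂ - z₂)|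
      ≤ |f (x₁, x₂) - f (x₁, x₂ - z₂)| + |f (x₁ - z₁, x₂) - f (x₁ - z₁, x₂ - z₂)| := by
    have : f (x₁, x₂) - f (x₁ - z₁, x₂) - f (x₁, x₂ - z₂) + f (x₁ - z₁, x₂ - z₂)
        = (f (x₁, x₂) - f (x₁, x₂ - z₂)) - (f (x₁ - z₁, x₂) - f (x₁ - z₁, x₂ - z₂)) := by ring
    rw [this]; exact abs_sub _ _
  rcases le_total |z₁| 1 with h1 | h1 <;> rcases le_total |z₂| 1 with h2 | h2
  · have hm1 : mbd z₁ = |z₁| := min_eq_right h1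
    have hm2 : mbd z₂ = |z₂| := min_eq_right h2
    rw [hm1, hm2]
    have := h.mixed x₁ x₂ z₁ z₂
    nlinarith [mul_nonneg hM (mul_nonneg (abs_nonneg z₁) (abs_nonneg z₂))]
  · have hm1 : mbd z₁ = |z₁| := min_eq_right h1
    have hm2 : mbd z₂ = 1 := min_eq_left h2
    rw [hm1, hm2]
    have e1 := h.lip1 x₁ x₂ z₁
    have e2 := h.lip1 x₁ (x₂ - z₂) z₁
    nlinarith [abs_nonneg z₁]
  · have hm1 : mbd z₁ = 1 := min_eq_left h1
    have hm2 : mbd z₂ = |z₂| := min_eq_right h2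
    rw [hm1, hm2]
    have e1 := h.lip2 x₁ x₂ z₂
    have e2 := h.lip2 (x₁ - z₁) x₂ z₂
    nlinarith [abs_nonneg z₂]
  · have hm1 : mbd z₁ = 1 := min_eq_left h1
    have hm2 : mbd z₂ = 1 := min_eq_left h2
    rw [hm1, hm2]
    have e1 := h.bdd (x₁, x₂); have e2 := h.bdd (x₁ - z₁, x₂)
    have e3 := h.bdd (x₁, x₂ - z₂); have e4 := h.bdd (x₁ - z₁, x₂ - z₂)
    have := abs_add_le (f (x₁, x₂) - f (x₁ - z₁, x₂) - f (x₁, x₂ - z₂)) (f (x₁ - z₁, x₂ - z₂))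
    have h5 := abs_sub (f (x₁, x₂) - f (x₁ - z₁, x₂)) (f (x₁, x₂ - z₂))
    have h6 := abs_sub (f (x₁, x₂)) (f (x₁ - z₁, x₂))
    have h7 := abs_abs (f (x₁ - z₁, x₂ - z₂))
    nlinarith [abs_nonneg (f (x₁, x₂))]

end NiceFun

lemma NiceFun.mul {f g : ℝ × ℝ → ℝ} {M N : ℝ} (hf : NiceFun f M) (hg : NiceFun g N) :
    NiceFun (fun p => f p * g p) (4 * (M * N)) := by
  have hM := hf.nonneg; have hN := hg.nonneg
  have hMN : 0 ≤ M * N := mul_nonneg hM hN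
  refine ⟨by positivity, hf.cont.mul hg.cont, fun p => ?_, fun p q => ?_, fun x₁ x₂ z₁ z₂ => ?_⟩
  · rw [abs_mul]
    calc |f p| * |g p| ≤ M * N := mul_le_mul (hf.bdd p) (hg.bdd p) (abs_nonneg _) hM
      _ ≤ 4 * (M * N) := by linarith
  · have key : f p * g p - f q * g q = f p * (g p - g q) + (f p - f q) * g q := by ring
    have h1 : |f p * (g p - g q)| ≤ M * (N * ‖p - q‖) := by
      rw [abs_mul]
      exact mul_le_mul (hf.bdd p) (hg.lip p q) (abs_nonneg _) hM
    have h2 : |(f p - f q) * g q| ≤ M * ‖p - q‖ * N := by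
      rw [abs_mul]
      exact mul_le_mul (hf.lip p q) (hg.bdd q) (abs_nonneg _)
        (mul_nonneg hM (norm_nonneg _))
    calc |f p * g p - f q * g q| ≤ |f p * (g p - g q)| + |(f p - f q) * g q| := by
          rw [key]; exact abs_add_le _ _
      _ ≤ 4 * (M * N) * ‖p - q‖ := by nlinarith [norm_nonneg (p - q)]
  · set a : ℝ × ℝ := (x₁, x₂)
    set b : ℝ × ℝ := (x₁ - z₁, x₂)
    set c : ℝ × ℝ := (x₁, x₂ - z₂)
    set d : ℝ × ℝ := (x₁ - z₁, x₂ - z₂)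
    have key : f a * g a - f b * g b - f c * g c + f d * g d
        = (f a - f b - f c + f d) * g a
          + (f c - f d) * (g a - g c)
          + (f b - f d) * (g a - g b)
          + f d * (g a - g b - g c + g d) := by ring
    have t1 : |(f a - f b - f c + f d) * g a| ≤ M * (|z₁| * |z₂|) * N := by
      rw [abs_mul]
      exact mul_le_mul (hf.mixed x₁ x₂ z₁ z₂) (hg.bdd a) (abs_nonneg _)
        (mul_nonneg hM (mul_nonneg (abs_nonneg _) (abs_nonneg _)))
    have t2 : |(f c - f d) * (g a - g c)| ≤ M * |z₁| * (N * |z₂|) := by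
      rw [abs_mul]
      exact mul_le_mul (hf.lip1 x₁ (x₂ - z₂) z₁) (hg.lip2 x₁ x₂ z₂) (abs_nonneg _)
        (mul_nonneg hM (abs_nonneg _))
    have t3 : |(f b - f d) * (g a - g b)| ≤ M * |z₂| * (N * |z₁|) := by
      rw [abs_mul]
      exact mul_le_mul (hf.lip2 (x₁ - z₁) x₂ z₂) (hg.lip1 x₁ x₂ z₁) (abs_nonneg _)
        (mul_nonneg hM (abs_nonneg _))
    have t4 : |f d * (g a - g b - g c + g d)| ≤ M * (N * (|z₁| * |z₂|)) := by
      rw [abs_mul]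
      exact mul_le_mul (hf.bdd d) (hg.mixed x₁ x₂ z₁ z₂) (abs_nonneg _) hM
    calc |f a * g a - f b * g b - f c * g c + f d * g d|
        ≤ |(f a - f b - f c + f d) * g a| + |(f c - f d) * (g a - g c)|
          + |(f b - f d) * (g a - g b)| + |f d * (g a - g b - g c + g d)| := by
          rw [key]
          exact (abs_add_le _ _).trans (add_le_add_left
            ((abs_add_le _ _).trans (add_le_add_left (abs_add_le _ _) _)) _)
      _ ≤ 4 * (M * N) * (|z₁| * |z₂|) := by nlinarith []

lemma schwartz_bound {F : Type*} [NormedAddCommGroup F] [NormedSpace ℝ F]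
    (f : SchwartzMap (ℝ × ℝ) F) : ∃ C, 0 ≤ C ∧ ∀ x, ‖f x‖ ≤ C := by
  obtain ⟨C, hC, h⟩ := f.decay 0 0
  exact ⟨C, hC.le, fun x => by simpa [norm_iteratedFDeriv_zero] using h x⟩

lemma schwartz_lip {F : Type*} [NormedAddCommGroup F] [NormedSpace ℝ F]
    (f : SchwartzMap (ℝ × ℝ) F) : ∃ L, 0 ≤ L ∧ ∀ p q, ‖f p - f q‖ ≤ L * ‖p - q‖ := by
  obtain ⟨L, hL, h⟩ := schwartz_bound (SchwartzMap.fderivCLM ℝ (ℝ × ℝ) F f)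
  refine ⟨L, hL, fun p q => ?_⟩
  exact Convex.norm_image_sub_le_of_norm_fderiv_le
    (fun x _ => f.differentiable.differentiableAt)
    (fun x _ => by rw [← SchwartzMap.fderivCLM_apply ℝ f x]; exact h x)
    convex_univ (mem_univ q) (mem_univ p)

lemma schwartz_mixed (f : SchwartzMap (ℝ × ℝ) ℝ) :
    ∃ K, 0 ≤ K ∧ ∀ x₁ x₂ z₁ z₂ : ℝ,
      |f (x₁, x₂) - f (x₁ - z₁, x₂) - f (x₁, x₂ - z₂) + f (x₁ - z₁, x₂ - z₂)|
        ≤ K * (|z₁| * |z₂|) := by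
  obtain ⟨L, hL, hlip⟩ := schwartz_lip (SchwartzMap.fderivCLM ℝ (ℝ × ℝ) ℝ f)
  refine ⟨L, hL, fun x₁ x₂ z₁ z₂ => ?_⟩
  have key : ∀ s y : ℝ, HasDerivAt (fun t : ℝ => f (t, y)) (fderiv ℝ f (s, y) (1, 0)) s := by
    intro s y
    have h1 : HasDerivAt (fun t : ℝ => ((t, y) : ℝ × ℝ)) ((1 : ℝ), (0 : ℝ)) s :=
      (hasDerivAt_id s).prodMk (hasDerivAt_const s y)
    exact (f.differentiable.differentiableAt.hasFDerivAt).comp_hasDerivAt s h1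
  set G : ℝ → ℝ := fun s => f (s, x₂) - f (s, x₂ - z₂) with hGdef
  have hGder : ∀ s : ℝ, HasDerivAt G
      (fderiv ℝ f (s, x₂) (1, 0) - fderiv ℝ f (s, x₂ - z₂) (1, 0)) s :=
    fun s => (key s x₂).sub (key s (x₂ - z₂))
  have hGbd : ∀ s : ℝ, ‖fderiv ℝ f (s, x₂) (1, 0) - fderiv ℝ f (s, x₂ - z₂) (1, 0)‖
      ≤ L * |z₂| := by
    intro s
    have h1 : fderiv ℝ f (s, x₂) (1, 0) - fderiv ℝ f (s, x₂ - z₂) (1, 0)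
        = (fderiv ℝ f (s, x₂) - fderiv ℝ f (s, x₂ - z₂)) ((1 : ℝ), (0 : ℝ)) := rfl
    rw [h1]
    have h2 : ‖fderiv ℝ f (s, x₂) - fderiv ℝ f (s, x₂ - z₂)‖ ≤ L * |z₂| := by
      have := hlip (s, x₂) (s, x₂ - z₂)
      rw [norm_pair_sub₂] at this
      simpa [SchwartzMap.fderivCLM_apply] using this
    calc ‖(fderiv ℝ f (s, x₂) - fderiv ℝ f (s, x₂ - z₂)) ((1 : ℝ), (0 : ℝ))‖
        ≤ ‖fderiv ℝ f (s, x₂) - fderiv ℝ f (s, x₂ - z₂)‖ * ‖((1 : ℝ), (0 : ℝ))‖ :=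
          ContinuousLinearMap.le_opNorm _ _
      _ ≤ L * |z₂| := by
          have hn : ‖((1 : ℝ), (0 : ℝ))‖ = 1 := by
            rw [Prod.norm_def]; simp
          rw [hn, mul_one]; exact h2
  have hGlip : ‖G x₁ - G (x₁ - z₁)‖ ≤ L * |z₂| * ‖x₁ - (x₁ - z₁)‖ :=
    Convex.norm_image_sub_le_of_norm_deriv_le
      (fun s _ => (hGder s).differentiableAt)
      (fun s _ => by rw [(hGder s).deriv]; exact hGbd s)
      convex_univ (mem_univ (x₁ - z₁)) (mem_univ x₁)
  have hid : f (x₁, x₂) - f (x₁ - z₁, x₂) - f (x₁, x₂ - z₂) + f (x₁ - z₁, x₂ - z₂)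
      = G x₁ - G (x₁ - z₁) := by simp [hGdef]; ring
  rw [hid]
  have : ‖x₁ - (x₁ - z₁)‖ = |z₁| := by rw [Real.norm_eq_abs]; congr 1; ring
  rw [this] at hGlip
  calc |G x₁ - G (x₁ - z₁)| ≤ L * |z₂| * |z₁| := hGlip
    _ = L * (|z₁| * |z₂|) := by ring

lemma schwartz_nice (f : SchwartzMap (ℝ × ℝ) ℝ) : ∃ M, NiceFun (⇑f) M := by
  obtain ⟨C, hC0, hC⟩ := schwartz_bound f
  obtain ⟨L, hL0, hL⟩ := schwartz_lip f
  obtain ⟨K, hK0, hK⟩ := schwartz_mixed f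
  refine ⟨C + L + K, by linarith, f.continuous, fun p => ?_, fun p q => ?_,
    fun x₁ x₂ z₁ z₂ => ?_⟩
  · calc |f p| ≤ C := hC p
      _ ≤ C + L + K := by linarith
  · calc ‖f p - f q‖ ≤ L * ‖p - q‖ := hL p q
      _ ≤ (C + L + K) * ‖p - q‖ := by nlinarith [norm_nonneg (p - q)]
  · calc |f (x₁, x₂) - f (x₁ - z₁, x₂) - f (x₁, x₂ - z₂) + f (x₁ - z₁, x₂ - z₂)|
        ≤ K * (|z₁| * |z₂|) := hK x₁ x₂ z₁ z₂
      _ ≤ (C + L + K) * (|z₁| * |z₂|) := by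
          nlinarith [mul_nonneg (abs_nonneg z₁) (abs_nonneg z₂)]


lemma ker_eq (z : ℝ) : |z| ^ ((3:ℝ)/2) = ker z := rfl

lemma rep {f : ℝ × ℝ → ℝ} {M : ℝ} (hf : NiceFun f M) (Cf x₁ x₂ : ℝ) :
    sqrtDD Cf (fun y₁ y₂ => f (y₁, y₂)) x₁ x₂
      = Cf ^ 2 * ∫ z₁ : ℝ, ∫ z₂ : ℝ,
          (f (x₁, x₂) - f (x₁ - z₁, x₂) - f (x₁, x₂ - z₂) + f (x₁ - z₁, x₂ - z₂))
            / (ker z₁ * ker z₂) := by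
  have hint : ∀ y₁ y₂ : ℝ, Integrable fun z₂ : ℝ => (f (y₁, y₂) - f (y₁, y₂ - z₂)) / ker z₂ := by
    intro y₁ y₂
    refine integrable_div_ker ?_ (C := 2 * M) (fun z => hf.diff2 y₁ y₂ z)
    exact continuous_const.sub
      (hf.cont.comp (continuous_const.prodMk (continuous_const.sub continuous_id)))
  have hdiff : ∀ z₁ : ℝ,
      sqrtD2 Cf (fun y₁ y₂ => f (y₁, y₂)) x₁ x₂
        - sqrtD2 Cf (fun y₁ y₂ => f (y₁, y₂)) (x₁ - z₁) x₂
      = Cf * ∫ z₂ : ℝ,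
          (f (x₁, x₂) - f (x₁ - z₁, x₂) - f (x₁, x₂ - z₂) + f (x₁ - z₁, x₂ - z₂)) / ker z₂ := by
    intro z₁
    unfold sqrtD2
    beta_reduce
    simp only [ker_eq]
    rw [← mul_sub, ← integral_sub (hint x₁ x₂) (hint (x₁ - z₁) x₂)]
    refine congrArg (fun t => Cf * t) (integral_congr_ae (ae_of_all _ fun z₂ => ?_))
    ring
  unfold sqrtDD sqrtD1
  have hfun : (fun z₁ : ℝ =>
      (sqrtD2 Cf (fun y₁ y₂ => f (y₁, y₂)) x₁ x₂
        - sqrtD2 Cf (fun y₁ y₂ => f (y₁, y₂)) (x₁ - z₁) x₂) / |z₁| ^ ((3:ℝ)/2))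
      = fun z₁ : ℝ => Cf * ∫ z₂ : ℝ,
          (f (x₁, x₂) - f (x₁ - z₁, x₂) - f (x₁, x₂ - z₂) + f (x₁ - z₁, x₂ - z₂))
            / (ker z₁ * ker z₂) := by
    funext z₁
    rw [ker_eq, hdiff z₁, mul_div_assoc, ← integral_div]
    refine congrArg (fun t => Cf * t) (integral_congr_ae (ae_of_all _ fun z₂ => ?_))
    beta_reduce
    rw [div_div, mul_comm (ker z₂) (ker z₁)]
  rw [hfun, integral_const_mul]
  ring

end FracLeib

lemma aux_cf {c : ℝ} (hc : c ≠ 0) (a b k : ℝ) : c * (a / c * (b / k)) = a * b / k := by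
  have h : c * (a / c) = a := by rw [mul_comm, div_mul_cancel₀ _ hc]
  calc c * (a / c * (b / k)) = c * (a / c) * (b / k) := by ring
    _ = a * (b / k) := by rw [h]
    _ = a * b / k := by rw [mul_div_assoc]

open FracLeib in
/-- Two-variable fractional Leibniz rule for the cross fractional derivative. -/
theorem stmt_10 (φ ψ : SchwartzMap (ℝ × ℝ) ℝ) (Cf : ℝ) (hCf : 0 < Cf)
    (hCfdef : 1 / Cf = ∫ z : ℝ, (1 - Real.cos (2 * Real.pi * z)) / |z| ^ ((3:ℝ)/2))
    (x₁ x₂ : ℝ) :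
    sqrtDD Cf (fun y₁ y₂ => φ (y₁, y₂) * ψ (y₁, y₂)) x₁ x₂
      = sqrtDD Cf (fun y₁ y₂ => φ (y₁, y₂)) x₁ x₂ * ψ (x₁, x₂)
        + Cf * (∫ z : ℝ, sqrtD1 Cf (fun y₁ y₂ => φ (y₁, y₂)) x₁ (x₂ - z) *
            (ψ (x₁, x₂) - ψ (x₁, x₂ - z)) / |z| ^ ((3:ℝ)/2))
        + Cf * (∫ z : ℝ, sqrtD2 Cf (fun y₁ y₂ => φ (y₁, y₂)) (x₁ - z) x₂ *
            (ψ (x₁, x₂) - ψ (x₁ - z, x₂)) / |z| ^ ((3:ℝ)/2))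
        + Cf ^ 2 * ∫ z : ℝ × ℝ, φ (x₁ - z.1, x₂ - z.2) *
            (ψ (x₁, x₂) - ψ (x₁ - z.1, x₂) - ψ (x₁, x₂ - z.2) + ψ (x₁ - z.1, x₂ - z.2)) /
            (|z.1| ^ ((3:ℝ)/2) * |z.2| ^ ((3:ℝ)/2)) := by
  clear hCfdef
  obtain ⟨M, hφ⟩ := schwartz_nice φ
  obtain ⟨N, hψ⟩ := schwartz_nice ψ
  have hM := hφ.nonneg
  have hN := hψ.nonneg
  have hCf0 : Cf ≠ 0 := ne_of_gt hCf
  have hfg : NiceFun (fun p : ℝ × ℝ => φ p * ψ p) (4 * (M * N)) := hφ.mul hψ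
  -- pointwise bounds for the four numerators
  have hb1 : ∀ z₁ z₂ : ℝ,
      |(φ (x₁, x₂) - φ (x₁ - z₁, x₂) - φ (x₁, x₂ - z₂) + φ (x₁ - z₁, x₂ - z₂)) * ψ (x₁, x₂)|
        ≤ 4 * (M * N) * mbd z₁ * mbd z₂ := by
    intro z₁ z₂
    rw [abs_mul]
    calc |φ (x₁, x₂) - φ (x₁ - z₁, x₂) - φ (x₁, x₂ - z₂) + φ (x₁ - z₁, x₂ - z₂)| * |ψ (x₁, x₂)|
        ≤ 4 * M * (mbd z₁ * mbd z₂) * N := by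
          refine mul_le_mul (hφ.mixed' x₁ x₂ z₁ z₂) (hψ.bdd (x₁, x₂)) (abs_nonneg _) ?_
          have := mbd_nonneg z₁; have := mbd_nonneg z₂; positivity
      _ = 4 * (M * N) * mbd z₁ * mbd z₂ := by ring
  have hb2 : ∀ z₁ z₂ : ℝ,
      |(φ (x₁, x₂ - z₂) - φ (x₁ - z₁, x₂ - z₂)) * (ψ (x₁, x₂) - ψ (x₁, x₂ - z₂))|
        ≤ 4 * (M * N) * mbd z₁ * mbd z₂ := by
    intro z₁ z₂
    rw [abs_mul]
    calc |φ (x₁, x₂ - z₂) - φ (x₁ - z₁, x₂ - z₂)| * |ψ (x₁, x₂) - ψ (x₁, x₂ - z₂)|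
        ≤ (2 * M * mbd z₁) * (2 * N * mbd z₂) := by
          refine mul_le_mul (hφ.diff1 x₁ (x₂ - z₂) z₁) (hψ.diff2 x₁ x₂ z₂) (abs_nonneg _) ?_
          have := mbd_nonneg z₁; positivity
      _ = 4 * (M * N) * mbd z₁ * mbd z₂ := by ring
  have hb3 : ∀ z₁ z₂ : ℝ,
      |(φ (x₁ - z₁, x₂) - φ (x₁ - z₁, x₂ - z₂)) * (ψ (x₁, x₂) - ψ (x₁ - z₁, x₂))|
        ≤ 4 * (M * N) * mbd z₁ * mbd z₂ := by
    intro z₁ z₂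
    rw [abs_mul]
    calc |φ (x₁ - z₁, x₂) - φ (x₁ - z₁, x₂ - z₂)| * |ψ (x₁, x₂) - ψ (x₁ - z₁, x₂)|
        ≤ (2 * M * mbd z₂) * (2 * N * mbd z₁) := by
          refine mul_le_mul (hφ.diff2 (x₁ - z₁) x₂ z₂) (hψ.diff1 x₁ x₂ z₁) (abs_nonneg _) ?_
          have := mbd_nonneg z₂; positivity
      _ = 4 * (M * N) * mbd z₁ * mbd z₂ := by ring
  have hb4 : ∀ z₁ z₂ : ℝ,
      |φ (x₁ - z₁, x₂ - z₂) *
          (ψ (x₁, x₂) - ψ (x₁ - z₁, x₂) - ψ (x₁, x₂ - z₂) + ψ (x₁ - z₁, x₂ - z₂))|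
        ≤ 4 * (M * N) * mbd z₁ * mbd z₂ := by
    intro z₁ z₂
    rw [abs_mul]
    calc |φ (x₁ - z₁, x₂ - z₂)| *
          |ψ (x₁, x₂) - ψ (x₁ - z₁, x₂) - ψ (x₁, x₂ - z₂) + ψ (x₁ - z₁, x₂ - z₂)|
        ≤ M * (4 * N * (mbd z₁ * mbd z₂)) := by
          refine mul_le_mul (hφ.bdd _) (hψ.mixed' x₁ x₂ z₁ z₂) (abs_nonneg _) hM
      _ = 4 * (M * N) * mbd z₁ * mbd z₂ := by ring
  -- continuity of the four numerators (jointly in (z₁, z₂))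
  have cpb : Continuous fun z : ℝ × ℝ => ((x₁ - z.1, x₂) : ℝ × ℝ) :=
    (continuous_const.sub continuous_fst).prodMk continuous_const
  have cpc : Continuous fun z : ℝ × ℝ => ((x₁, x₂ - z.2) : ℝ × ℝ) :=
    continuous_const.prodMk (continuous_const.sub continuous_snd)
  have cpd : Continuous fun z : ℝ × ℝ => ((x₁ - z.1, x₂ - z.2) : ℝ × ℝ) :=
    (continuous_const.sub continuous_fst).prodMk (continuous_const.sub continuous_snd)
  have cn1 : Continuous fun z : ℝ × ℝ =>
      (φ (x₁, x₂) - φ (x₁ - z.1, x₂) - φ (x₁, x₂ - z.2) + φ (x₁ - z.1, x₂ - z.2)) * ψ (x₁, x₂) :=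
    (((continuous_const.sub (hφ.cont.comp cpb)).sub (hφ.cont.comp cpc)).add
      (hφ.cont.comp cpd)).mul continuous_const
  have cn2 : Continuous fun z : ℝ × ℝ =>
      (φ (x₁, x₂ - z.2) - φ (x₁ - z.1, x₂ - z.2)) * (ψ (x₁, x₂) - ψ (x₁, x₂ - z.2)) :=
    ((hφ.cont.comp cpc).sub (hφ.cont.comp cpd)).mul
      (continuous_const.sub (hψ.cont.comp cpc))
  have cn3 : Continuous fun z : ℝ × ℝ =>
      (φ (x₁ - z.1, x₂) - φ (x₁ - z.1, x₂ - z.2)) * (ψ (x₁, x₂) - ψ (x₁ - z.1, x₂)) :=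
    ((hφ.cont.comp cpb).sub (hφ.cont.comp cpd)).mul
      (continuous_const.sub (hψ.cont.comp cpb))
  have cn4 : Continuous fun z : ℝ × ℝ =>
      φ (x₁ - z.1, x₂ - z.2) *
        (ψ (x₁, x₂) - ψ (x₁ - z.1, x₂) - ψ (x₁, x₂ - z.2) + ψ (x₁ - z.1, x₂ - z.2)) :=
    (hφ.cont.comp cpd).mul
      (((continuous_const.sub (hψ.cont.comp cpb)).sub (hψ.cont.comp cpc)).add
        (hψ.cont.comp cpd))
  -- joint integrability of the four pieces
  have hG1 : Integrable (fun z : ℝ × ℝ =>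
      (φ (x₁, x₂) - φ (x₁ - z.1, x₂) - φ (x₁, x₂ - z.2) + φ (x₁ - z.1, x₂ - z.2)) * ψ (x₁, x₂)
        / (ker z.1 * ker z.2)) (volume.prod volume) :=
    joint_int cn1 (fun z => hb1 z.1 z.2)
  have hG2 : Integrable (fun z : ℝ × ℝ =>
      (φ (x₁, x₂ - z.2) - φ (x₁ - z.1, x₂ - z.2)) * (ψ (x₁, x₂) - ψ (x₁, x₂ - z.2))
        / (ker z.1 * ker z.2)) (volume.prod volume) :=
    joint_int cn2 (fun z => hb2 z.1 z.2)
  have hG3 : Integrable (fun z : ℝ × ℝ =>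
      (φ (x₁ - z.1, x₂) - φ (x₁ - z.1, x₂ - z.2)) * (ψ (x₁, x₂) - ψ (x₁ - z.1, x₂))
        / (ker z.1 * ker z.2)) (volume.prod volume) :=
    joint_int cn3 (fun z => hb3 z.1 z.2)
  have hG4 : Integrable (fun z : ℝ × ℝ =>
      φ (x₁ - z.1, x₂ - z.2) *
        (ψ (x₁, x₂) - ψ (x₁ - z.1, x₂) - ψ (x₁, x₂ - z.2) + ψ (x₁ - z.1, x₂ - z.2))
        / (ker z.1 * ker z.2)) (volume.prod volume) :=
    joint_int cn4 (fun z => hb4 z.1 z.2)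
  -- slice integrability in z₂ for fixed z₁
  have hs1 : ∀ z₁ : ℝ, Integrable fun z₂ : ℝ =>
      (φ (x₁, x₂) - φ (x₁ - z₁, x₂) - φ (x₁, x₂ - z₂) + φ (x₁ - z₁, x₂ - z₂)) * ψ (x₁, x₂)
        / (ker z₁ * ker z₂) := fun z₁ =>
    slice_int (cn1.comp (continuous_const.prodMk continuous_id)) (fun z₂ => hb1 z₁ z₂)
  have hs2 : ∀ z₁ : ℝ, Integrable fun z₂ : ℝ =>
      (φ (x₁, x₂ - z₂) - φ (x₁ - z₁, x₂ - z₂)) * (ψ (x₁, x₂) - ψ (x₁, x₂ - z₂))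
        / (ker z₁ * ker z₂) := fun z₁ =>
    slice_int (cn2.comp (continuous_const.prodMk continuous_id)) (fun z₂ => hb2 z₁ z₂)
  have hs3 : ∀ z₁ : ℝ, Integrable fun z₂ : ℝ =>
      (φ (x₁ - z₁, x₂) - φ (x₁ - z₁, x₂ - z₂)) * (ψ (x₁, x₂) - ψ (x₁ - z₁, x₂))
        / (ker z₁ * ker z₂) := fun z₁ =>
    slice_int (cn3.comp (continuous_const.prodMk continuous_id)) (fun z₂ => hb3 z₁ z₂)
  have hs4 : ∀ z₁ : ℝ, Integrable fun z₂ : ℝ =>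
      φ (x₁ - z₁, x₂ - z₂) *
        (ψ (x₁, x₂) - ψ (x₁ - z₁, x₂) - ψ (x₁, x₂ - z₂) + ψ (x₁ - z₁, x₂ - z₂))
        / (ker z₁ * ker z₂) := fun z₁ =>
    slice_int (cn4.comp (continuous_const.prodMk continuous_id)) (fun z₂ => hb4 z₁ z₂)
  -- integrability of the partial integrals in z₁
  have hI1 : Integrable (fun z₁ : ℝ => ∫ z₂ : ℝ,
      (φ (x₁, x₂) - φ (x₁ - z₁, x₂) - φ (x₁, x₂ - z₂) + φ (x₁ - z₁, x₂ - z₂)) * ψ (x₁, x₂)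
        / (ker z₁ * ker z₂)) volume := hG1.integral_prod_left
  have hI2 : Integrable (fun z₁ : ℝ => ∫ z₂ : ℝ,
      (φ (x₁, x₂ - z₂) - φ (x₁ - z₁, x₂ - z₂)) * (ψ (x₁, x₂) - ψ (x₁, x₂ - z₂))
        / (ker z₁ * ker z₂)) volume := hG2.integral_prod_left
  have hI3 : Integrable (fun z₁ : ℝ => ∫ z₂ : ℝ,
      (φ (x₁ - z₁, x₂) - φ (x₁ - z₁, x₂ - z₂)) * (ψ (x₁, x₂) - ψ (x₁ - z₁, x₂))
        / (ker z₁ * ker z₂)) volume := hG3.integral_prod_left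
  have hI4 : Integrable (fun z₁ : ℝ => ∫ z₂ : ℝ,
      φ (x₁ - z₁, x₂ - z₂) *
        (ψ (x₁, x₂) - ψ (x₁ - z₁, x₂) - ψ (x₁, x₂ - z₂) + ψ (x₁ - z₁, x₂ - z₂))
        / (ker z₁ * ker z₂)) volume := hG4.integral_prod_left
  -- Step 1: representation of the left-hand side
  have h0 : sqrtDD Cf (fun y₁ y₂ => φ (y₁, y₂) * ψ (y₁, y₂)) x₁ x₂
      = Cf ^ 2 * ∫ z₁ : ℝ, ∫ z₂ : ℝ,
          (φ (x₁, x₂) * ψ (x₁, x₂) - φ (x₁ - z₁, x₂) * ψ (x₁ - z₁, x₂)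
            - φ (x₁, x₂ - z₂) * ψ (x₁, x₂ - z₂)
            + φ (x₁ - z₁, x₂ - z₂) * ψ (x₁ - z₁, x₂ - z₂)) / (ker z₁ * ker z₂) :=
    rep hfg Cf x₁ x₂
  -- Step 2: split into four pieces
  have hsplit : (∫ z₁ : ℝ, ∫ z₂ : ℝ,
        (φ (x₁, x₂) * ψ (x₁, x₂) - φ (x₁ - z₁, x₂) * ψ (x₁ - z₁, x₂)
          - φ (x₁, x₂ - z₂) * ψ (x₁, x₂ - z₂)
          + φ (x₁ - z₁, x₂ - z₂) * ψ (x₁ - z₁, x₂ - z₂)) / (ker z₁ * ker z₂))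
      = (∫ z₁ : ℝ, ∫ z₂ : ℝ,
          (φ (x₁, x₂) - φ (x₁ - z₁, x₂) - φ (x₁, x₂ - z₂) + φ (x₁ - z₁, x₂ - z₂)) * ψ (x₁, x₂)
            / (ker z₁ * ker z₂))
        + (∫ z₁ : ℝ, ∫ z₂ : ℝ,
          (φ (x₁, x₂ - z₂) - φ (x₁ - z₁, x₂ - z₂)) * (ψ (x₁, x₂) - ψ (x₁, x₂ - z₂))
            / (ker z₁ * ker z₂))
        + (∫ z₁ : ℝ, ∫ z₂ : ℝ,
          (φ (x₁ - z₁, x₂) - φ (x₁ - z₁, x₂ - z₂)) * (ψ (x₁, x₂) - ψ (x₁ - z₁, x₂))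
            / (ker z₁ * ker z₂))
        + (∫ z₁ : ℝ, ∫ z₂ : ℝ,
          φ (x₁ - z₁, x₂ - z₂) *
            (ψ (x₁, x₂) - ψ (x₁ - z₁, x₂) - ψ (x₁, x₂ - z₂) + ψ (x₁ - z₁, x₂ - z₂))
            / (ker z₁ * ker z₂)) := by
    have hin : (fun z₁ : ℝ => ∫ z₂ : ℝ,
        (φ (x₁, x₂) * ψ (x₁, x₂) - φ (x₁ - z₁, x₂) * ψ (x₁ - z₁, x₂)
          - φ (x₁, x₂ - z₂) * ψ (x₁, x₂ - z₂)
          + φ (x₁ - z₁, x₂ - z₂) * ψ (x₁ - z₁, x₂ - z₂)) / (ker z₁ * ker z₂))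
        = fun z₁ : ℝ =>
          (∫ z₂ : ℝ, (φ (x₁, x₂) - φ (x₁ - z₁, x₂) - φ (x₁, x₂ - z₂) + φ (x₁ - z₁, x₂ - z₂))
              * ψ (x₁, x₂) / (ker z₁ * ker z₂))
          + (∫ z₂ : ℝ, (φ (x₁, x₂ - z₂) - φ (x₁ - z₁, x₂ - z₂)) * (ψ (x₁, x₂) - ψ (x₁, x₂ - z₂))
              / (ker z₁ * ker z₂))
          + (∫ z₂ : ℝ, (φ (x₁ - z₁, x₂) - φ (x₁ - z₁, x₂ - z₂)) * (ψ (x₁, x₂) - ψ (x₁ - z₁, x₂))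
              / (ker z₁ * ker z₂))
          + (∫ z₂ : ℝ, φ (x₁ - z₁, x₂ - z₂) *
              (ψ (x₁, x₂) - ψ (x₁ - z₁, x₂) - ψ (x₁, x₂ - z₂) + ψ (x₁ - z₁, x₂ - z₂))
              / (ker z₁ * ker z₂)) := by
      funext z₁
      rw [show (fun z₂ : ℝ =>
          (φ (x₁, x₂) * ψ (x₁, x₂) - φ (x₁ - z₁, x₂) * ψ (x₁ - z₁, x₂)
            - φ (x₁, x₂ - z₂) * ψ (x₁, x₂ - z₂)
            + φ (x₁ - z₁, x₂ - z₂) * ψ (x₁ - z₁, x₂ - z₂)) / (ker z₁ * ker z₂))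
          = fun z₂ : ℝ =>
            (φ (x₁, x₂) - φ (x₁ - z₁, x₂) - φ (x₁, x₂ - z₂) + φ (x₁ - z₁, x₂ - z₂))
                * ψ (x₁, x₂) / (ker z₁ * ker z₂)
              + (φ (x₁, x₂ - z₂) - φ (x₁ - z₁, x₂ - z₂)) * (ψ (x₁, x₂) - ψ (x₁, x₂ - z₂))
                / (ker z₁ * ker z₂)
              + (φ (x₁ - z₁, x₂) - φ (x₁ - z₁, x₂ - z₂)) * (ψ (x₁, x₂) - ψ (x₁ - z₁, x₂))
                / (ker z₁ * ker z₂)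
              + φ (x₁ - z₁, x₂ - z₂) *
                (ψ (x₁, x₂) - ψ (x₁ - z₁, x₂) - ψ (x₁, x₂ - z₂) + ψ (x₁ - z₁, x₂ - z₂))
                / (ker z₁ * ker z₂) from funext fun z₂ => by ring]
      have ha12 : Integrable (fun z₂ : ℝ => (φ (x₁, x₂) - φ (x₁ - z₁, x₂) - φ (x₁, x₂ - z₂) + φ (x₁ - z₁, x₂ - z₂)) * ψ (x₁, x₂) / (ker z₁ * ker z₂)
          + (φ (x₁, x₂ - z₂) - φ (x₁ - z₁, x₂ - z₂)) * (ψ (x₁, x₂) - ψ (x₁, x₂ - z₂)) / (ker z₁ * ker z₂)) volume := (hs1 z₁).add (hs2 z₁)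
      have ha123 : Integrable (fun z₂ : ℝ => (φ (x₁, x₂) - φ (x₁ - z₁, x₂) - φ (x₁, x₂ - z₂) + φ (x₁ - z₁, x₂ - z₂)) * ψ (x₁, x₂) / (ker z₁ * ker z₂)
          + (φ (x₁, x₂ - z₂) - φ (x₁ - z₁, x₂ - z₂)) * (ψ (x₁, x₂) - ψ (x₁, x₂ - z₂)) / (ker z₁ * ker z₂)
          + (φ (x₁ - z₁, x₂) - φ (x₁ - z₁, x₂ - z₂)) * (ψ (x₁, x₂) - ψ (x₁ - z₁, x₂)) / (ker z₁ * ker z₂)) volume := ha12.add (hs3 z₁)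
      rw [integral_add ha123 (hs4 z₁), integral_add ha12 (hs3 z₁),
        integral_add (hs1 z₁) (hs2 z₁)]
    rw [hin]
    have hc12 : Integrable (fun z₁ : ℝ => (∫ z₂ : ℝ, (φ (x₁, x₂) - φ (x₁ - z₁, x₂) - φ (x₁, x₂ - z₂) + φ (x₁ - z₁, x₂ - z₂)) * ψ (x₁, x₂) / (ker z₁ * ker z₂)) + (∫ z₂ : ℝ, (φ (x₁, x₂ - z₂) - φ (x₁ - z₁, x₂ - z₂)) * (ψ (x₁, x₂) - ψ (x₁, x₂ - z₂)) / (ker z₁ * ker z₂))) volume := hI1.add hI2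
    have hc123 : Integrable (fun z₁ : ℝ => (∫ z₂ : ℝ, (φ (x₁, x₂) - φ (x₁ - z₁, x₂) - φ (x₁, x₂ - z₂) + φ (x₁ - z₁, x₂ - z₂)) * ψ (x₁, x₂) / (ker z₁ * ker z₂)) + (∫ z₂ : ℝ, (φ (x₁, x₂ - z₂) - φ (x₁ - z₁, x₂ - z₂)) * (ψ (x₁, x₂) - ψ (x₁, x₂ - z₂)) / (ker z₁ * ker z₂)) + (∫ z₂ : ℝ, (φ (x₁ - z₁, x₂) - φ (x₁ - z₁, x₂ - z₂)) * (ψ (x₁, x₂) - ψ (x₁ - z₁, x₂)) / (ker z₁ * ker z₂))) volume := hc12.add hI3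
    rw [integral_add hc123 hI4, integral_add hc12 hI3, integral_add hI1 hI2]
  -- Term 1
  have final1 : Cf ^ 2 * (∫ z₁ : ℝ, ∫ z₂ : ℝ,
        (φ (x₁, x₂) - φ (x₁ - z₁, x₂) - φ (x₁, x₂ - z₂) + φ (x₁ - z₁, x₂ - z₂)) * ψ (x₁, x₂)
          / (ker z₁ * ker z₂))
      = sqrtDD Cf (fun y₁ y₂ => φ (y₁, y₂)) x₁ x₂ * ψ (x₁, x₂) := by
    have e1 : (∫ z₁ : ℝ, ∫ z₂ : ℝ,
        (φ (x₁, x₂) - φ (x₁ - z₁, x₂) - φ (x₁, x₂ - z₂) + φ (x₁ - z₁, x₂ - z₂)) * ψ (x₁, x₂)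
          / (ker z₁ * ker z₂))
        = (∫ z₁ : ℝ, ∫ z₂ : ℝ,
            (φ (x₁, x₂) - φ (x₁ - z₁, x₂) - φ (x₁, x₂ - z₂) + φ (x₁ - z₁, x₂ - z₂))
              / (ker z₁ * ker z₂)) * ψ (x₁, x₂) := by
      rw [← integral_mul_const]
      refine integral_congr_ae (ae_of_all _ fun z₁ => ?_)
      beta_reduce
      rw [← integral_mul_const]
      exact integral_congr_ae (ae_of_all _ fun z₂ => by ring)
    rw [e1, rep hφ Cf x₁ x₂]
    ring
  -- Term 2
  have hinner2 : ∀ z₂ : ℝ, (∫ z₁ : ℝ,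
        (φ (x₁, x₂ - z₂) - φ (x₁ - z₁, x₂ - z₂)) * (ψ (x₁, x₂) - ψ (x₁, x₂ - z₂))
          / (ker z₁ * ker z₂))
      = (sqrtD1 Cf (fun y₁ y₂ => φ (y₁, y₂)) x₁ (x₂ - z₂) / Cf)
          * ((ψ (x₁, x₂) - ψ (x₁, x₂ - z₂)) / ker z₂) := by
    intro z₂
    have : (fun z₁ : ℝ =>
        (φ (x₁, x₂ - z₂) - φ (x₁ - z₁, x₂ - z₂)) * (ψ (x₁, x₂) - ψ (x₁, x₂ - z₂))
          / (ker z₁ * ker z₂))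
        = fun z₁ : ℝ => (φ (x₁, x₂ - z₂) - φ (x₁ - z₁, x₂ - z₂)) / ker z₁
            * ((ψ (x₁, x₂) - ψ (x₁, x₂ - z₂)) / ker z₂) := by
      funext z₁; ring
    rw [this, integral_mul_const]
    congr 1
    unfold sqrtD1
    beta_reduce
    simp only [ker_eq]
    rw [mul_div_cancel_left₀ _ hCf0]
  have final2 : Cf ^ 2 * (∫ z₁ : ℝ, ∫ z₂ : ℝ,
        (φ (x₁, x₂ - z₂) - φ (x₁ - z₁, x₂ - z₂)) * (ψ (x₁, x₂) - ψ (x₁, x₂ - z₂))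
          / (ker z₁ * ker z₂))
      = Cf * (∫ z : ℝ, sqrtD1 Cf (fun y₁ y₂ => φ (y₁, y₂)) x₁ (x₂ - z) *
          (ψ (x₁, x₂) - ψ (x₁, x₂ - z)) / |z| ^ ((3:ℝ)/2)) := by
    have hswap : (∫ z₁ : ℝ, ∫ z₂ : ℝ,
        (φ (x₁, x₂ - z₂) - φ (x₁ - z₁, x₂ - z₂)) * (ψ (x₁, x₂) - ψ (x₁, x₂ - z₂))
          / (ker z₁ * ker z₂))
        = ∫ z₂ : ℝ, ∫ z₁ : ℝ,
          (φ (x₁, x₂ - z₂) - φ (x₁ - z₁, x₂ - z₂)) * (ψ (x₁, x₂) - ψ (x₁, x₂ - z₂))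
            / (ker z₁ * ker z₂) :=
      integral_integral_swap hG2
    rw [hswap]
    have : (fun z₂ : ℝ => ∫ z₁ : ℝ,
        (φ (x₁, x₂ - z₂) - φ (x₁ - z₁, x₂ - z₂)) * (ψ (x₁, x₂) - ψ (x₁, x₂ - z₂))
          / (ker z₁ * ker z₂))
        = fun z₂ : ℝ => (sqrtD1 Cf (fun y₁ y₂ => φ (y₁, y₂)) x₁ (x₂ - z₂) / Cf)
            * ((ψ (x₁, x₂) - ψ (x₁, x₂ - z₂)) / ker z₂) := funext hinner2
    rw [this]
    rw [show (fun z : ℝ => sqrtD1 Cf (fun y₁ y₂ => φ (y₁, y₂)) x₁ (x₂ - z) *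
          (ψ (x₁, x₂) - ψ (x₁, x₂ - z)) / |z| ^ ((3:ℝ)/2))
        = fun z : ℝ => Cf * ((sqrtD1 Cf (fun y₁ y₂ => φ (y₁, y₂)) x₁ (x₂ - z) / Cf)
            * ((ψ (x₁, x₂) - ψ (x₁, x₂ - z)) / ker z)) from funext fun z => by
          rw [ker_eq]; exact (aux_cf hCf0 _ _ _).symm]
    rw [integral_const_mul]
    ring
  -- Term 3
  have hinner3 : ∀ z₁ : ℝ, (∫ z₂ : ℝ,
        (φ (x₁ - z₁, x₂) - φ (x₁ - z₁, x₂ - z₂)) * (ψ (x₁, x₂) - ψ (x₁ - z₁, x₂))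
          / (ker z₁ * ker z₂))
      = (sqrtD2 Cf (fun y₁ y₂ => φ (y₁, y₂)) (x₁ - z₁) x₂ / Cf)
          * ((ψ (x₁, x₂) - ψ (x₁ - z₁, x₂)) / ker z₁) := by
    intro z₁
    have : (fun z₂ : ℝ =>
        (φ (x₁ - z₁, x₂) - φ (x₁ - z₁, x₂ - z₂)) * (ψ (x₁, x₂) - ψ (x₁ - z₁, x₂))
          / (ker z₁ * ker z₂))
        = fun z₂ : ℝ => (φ (x₁ - z₁, x₂) - φ (x₁ - z₁, x₂ - z₂)) / ker z₂
            * ((ψ (x₁, x₂) - ψ (x₁ - z₁, x₂)) / ker z₁) := by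
      funext z₂; ring
    rw [this, integral_mul_const]
    congr 1
    unfold sqrtD2
    beta_reduce
    simp only [ker_eq]
    rw [mul_div_cancel_left₀ _ hCf0]
  have final3 : Cf ^ 2 * (∫ z₁ : ℝ, ∫ z₂ : ℝ,
        (φ (x₁ - z₁, x₂) - φ (x₁ - z₁, x₂ - z₂)) * (ψ (x₁, x₂) - ψ (x₁ - z₁, x₂))
          / (ker z₁ * ker z₂))
      = Cf * (∫ z : ℝ, sqrtD2 Cf (fun y₁ y₂ => φ (y₁, y₂)) (x₁ - z) x₂ *
          (ψ (x₁, x₂) - ψ (x₁ - z, x₂)) / |z| ^ ((3:ℝ)/2)) := by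
    rw [show (fun z₁ : ℝ => ∫ z₂ : ℝ,
        (φ (x₁ - z₁, x₂) - φ (x₁ - z₁, x₂ - z₂)) * (ψ (x₁, x₂) - ψ (x₁ - z₁, x₂))
          / (ker z₁ * ker z₂))
        = fun z₁ : ℝ => (sqrtD2 Cf (fun y₁ y₂ => φ (y₁, y₂)) (x₁ - z₁) x₂ / Cf)
            * ((ψ (x₁, x₂) - ψ (x₁ - z₁, x₂)) / ker z₁) from funext hinner3]
    rw [show (fun z : ℝ => sqrtD2 Cf (fun y₁ y₂ => φ (y₁, y₂)) (x₁ - z) x₂ *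
          (ψ (x₁, x₂) - ψ (x₁ - z, x₂)) / |z| ^ ((3:ℝ)/2))
        = fun z : ℝ => Cf * ((sqrtD2 Cf (fun y₁ y₂ => φ (y₁, y₂)) (x₁ - z) x₂ / Cf)
            * ((ψ (x₁, x₂) - ψ (x₁ - z, x₂)) / ker z)) from funext fun z => by
          rw [ker_eq]; exact (aux_cf hCf0 _ _ _).symm]
    rw [integral_const_mul]
    ring
  -- Term 4
  have final4 : Cf ^ 2 * (∫ z₁ : ℝ, ∫ z₂ : ℝ,
        φ (x₁ - z₁, x₂ - z₂) *
          (ψ (x₁, x₂) - ψ (x₁ - z₁, x₂) - ψ (x₁, x₂ - z₂) + ψ (x₁ - z₁, x₂ - z₂))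
          / (ker z₁ * ker z₂))
      = Cf ^ 2 * ∫ z : ℝ × ℝ, φ (x₁ - z.1, x₂ - z.2) *
          (ψ (x₁, x₂) - ψ (x₁ - z.1, x₂) - ψ (x₁, x₂ - z.2) + ψ (x₁ - z.1, x₂ - z.2)) /
          (|z.1| ^ ((3:ℝ)/2) * |z.2| ^ ((3:ℝ)/2)) := by
    congr 1
    rw [MeasureTheory.integral_integral hG4, ← Measure.volume_eq_prod]
    simp only [ker_eq]
  calc sqrtDD Cf (fun y₁ y₂ => φ (y₁, y₂) * ψ (y₁, y₂)) x₁ x₂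
      = Cf ^ 2 * ∫ z₁ : ℝ, ∫ z₂ : ℝ,
          (φ (x₁, x₂) * ψ (x₁, x₂) - φ (x₁ - z₁, x₂) * ψ (x₁ - z₁, x₂)
            - φ (x₁, x₂ - z₂) * ψ (x₁, x₂ - z₂)
            + φ (x₁ - z₁, x₂ - z₂) * ψ (x₁ - z₁, x₂ - z₂)) / (ker z₁ * ker z₂) := h0
    _ = Cf ^ 2 * (∫ z₁ : ℝ, ∫ z₂ : ℝ,
          (φ (x₁, x₂) - φ (x₁ - z₁, x₂) - φ (x₁, x₂ - z₂) + φ (x₁ - z₁, x₂ - z₂)) * ψ (x₁, x₂)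
            / (ker z₁ * ker z₂))
        + Cf ^ 2 * (∫ z₁ : ℝ, ∫ z₂ : ℝ,
          (φ (x₁, x₂ - z₂) - φ (x₁ - z₁, x₂ - z₂)) * (ψ (x₁, x₂) - ψ (x₁, x₂ - z₂))
            / (ker z₁ * ker z₂))
        + Cf ^ 2 * (∫ z₁ : ℝ, ∫ z₂ : ℝ,
          (φ (x₁ - z₁, x₂) - φ (x₁ - z₁, x₂ - z₂)) * (ψ (x₁, x₂) - ψ (x₁ - z₁, x₂))
            / (ker z₁ * ker z₂))
        + Cf ^ 2 * (∫ z₁ : ℝ, ∫ z₂ : ℝ,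
          φ (x₁ - z₁, x₂ - z₂) *
            (ψ (x₁, x₂) - ψ (x₁ - z₁, x₂) - ψ (x₁, x₂ - z₂) + ψ (x₁ - z₁, x₂ - z₂))
            / (ker z₁ * ker z₂)) := by rw [hsplit]; ring
    _ = _ := by rw [final1, final2, final3, final4]
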